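/- Let X be a real D₁ × D₂ matrix and d₁ ≤ D₁. Suppose B⋆ ∈ {±1}^{D₂ × d₁} maximizes B ↦ ‖XB‖₊ over all sign matrices in {±1}^{D₂ × d₁}, and suppose U⋆ is a real D₁ × d₁ matrix with orthonormal columns (U⋆ᵀU⋆ = I_{d₁}) maximizing U ↦ Tr(UᵀXB⋆) over all D₁ × d₁ matrices U with orthonormal columns. Then U⋆ maximizes U ↦ ‖UᵀX‖₁ over all D₁ × d₁ matrices with orthonormal columns, and ‖U⋆ᵀX‖₁ = Tr(U⋆ᵀXB⋆) = ‖XB⋆‖₊. -/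

import Mathlib

open Matrix BigOperators

/-- Entrywise L1 norm of a real matrix. -/
noncomputable def l1Norm {m n : ℕ} (M : Matrix (Fin m) (Fin n) ℝ) : ℝ :=
  ∑ i, ∑ j, |M i j|

/-- Nuclear norm of a real matrix: trace of the unique positive semidefinite
square root of the Gram matrix `Aᵀ * A`. -/
noncomputable def nuclearNorm {D d : ℕ} (A : Matrix (Fin D) (Fin d) ℝ) : ℝ :=
  (have hA : (Aᵀ * A).PosSemidef := by
      simpa using Matrix.posSemidef_conjTranspose_mul_self A
    (hA.1.eigenvectorUnitary : Matrix (Fin d) (Fin d) ℝ) *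
      diagonal (Real.sqrt ∘ hA.1.eigenvalues) *
      (star hA.1.eigenvectorUnitary : Matrix (Fin d) (Fin d) ℝ)).trace

section Aux

variable {D d : ℕ}

lemma myGram (A : Matrix (Fin D) (Fin d) ℝ) : (Aᵀ * A).PosSemidef := by
  simpa using Matrix.posSemidef_conjTranspose_mul_self A

noncomputable def evP (A : Matrix (Fin D) (Fin d) ℝ) : Matrix (Fin d) (Fin d) ℝ :=
  ((myGram A).1.eigenvectorUnitary : Matrix (Fin d) (Fin d) ℝ)

noncomputable def evμ (A : Matrix (Fin D) (Fin d) ℝ) : Fin d → ℝ :=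
  (myGram A).1.eigenvalues

lemma evμ_nonneg (A : Matrix (Fin D) (Fin d) ℝ) (i : Fin d) : 0 ≤ evμ A i :=
  (myGram A).eigenvalues_nonneg i

lemma evP_star_mul (A : Matrix (Fin D) (Fin d) ℝ) : (evP A)ᵀ * evP A = 1 := by
  have h := (Matrix.mem_unitaryGroup_iff'.mp (myGram A).1.eigenvectorUnitary.2)
  simpa [evP, Matrix.star_eq_conjTranspose, Matrix.conjTranspose_eq_transpose_of_trivial] using h

lemma evP_mul_star (A : Matrix (Fin D) (Fin d) ℝ) : evP A * (evP A)ᵀ = 1 := by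
  have h := (Matrix.mem_unitaryGroup_iff.mp (myGram A).1.eigenvectorUnitary.2)
  simpa [evP, Matrix.star_eq_conjTranspose, Matrix.conjTranspose_eq_transpose_of_trivial] using h

lemma evP_diag (A : Matrix (Fin D) (Fin d) ℝ) :
    (evP A)ᵀ * (Aᵀ * A) * evP A = Matrix.diagonal (evμ A) := by
  have h := (myGram A).1.conjStarAlgAut_star_eigenvectorUnitary
  simp only [Unitary.conjStarAlgAut_apply, star_star] at h
  simpa [evP, evμ, Matrix.star_eq_conjTranspose, Matrix.conjTranspose_eq_transpose_of_trivial,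
    Function.comp] using h

lemma gram_AP (A : Matrix (Fin D) (Fin d) ℝ) :
    (A * evP A)ᵀ * (A * evP A) = Matrix.diagonal (evμ A) := by
  rw [Matrix.transpose_mul]
  calc (evP A)ᵀ * Aᵀ * (A * evP A) = (evP A)ᵀ * (Aᵀ * A) * evP A := by
        simp [Matrix.mul_assoc]
    _ = Matrix.diagonal (evμ A) := evP_diag A

lemma nuclearNorm_eq_sum (A : Matrix (Fin D) (Fin d) ℝ) :
    nuclearNorm A = ∑ i, Real.sqrt (evμ A i) := by
  unfold nuclearNorm
  show (((myGram A).1.eigenvectorUnitary : Matrix (Fin d) (Fin d) ℝ) *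
      diagonal (Real.sqrt ∘ (myGram A).1.eigenvalues) *
      (star (myGram A).1.eigenvectorUnitary : Matrix (Fin d) (Fin d) ℝ)).trace = _
  rw [Matrix.trace_mul_comm]
  rw [← Matrix.mul_assoc]
  have h1 : star ((myGram A).1.eigenvectorUnitary : Matrix (Fin d) (Fin d) ℝ) *
      ((myGram A).1.eigenvectorUnitary : Matrix (Fin d) (Fin d) ℝ) = 1 :=
    Matrix.mem_unitaryGroup_iff'.mp (myGram A).1.eigenvectorUnitary.2
  rw [h1, Matrix.one_mul, Matrix.trace_diagonal]
  simp [evμ]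

end Aux

section Aux2
variable {D d : ℕ}

lemma col_sq_sum {A B : Matrix (Fin D) (Fin d) ℝ} (i j : Fin d) :
    (Aᵀ * B) i j = ∑ k, A k i * B k j := by
  simp [Matrix.mul_apply]

lemma trace_le_nuclearNorm (A : Matrix (Fin D) (Fin d) ℝ)
    (V : Matrix (Fin D) (Fin d) ℝ) (hV : Vᵀ * V = 1) :
    (Vᵀ * A).trace ≤ nuclearNorm A := by
  set P := evP A with hP
  set C := V * P with hC
  set M := A * P with hM
  have hCC : Cᵀ * C = 1 := by
    rw [hC, Matrix.transpose_mul]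
    calc Pᵀ * Vᵀ * (V * P) = Pᵀ * (Vᵀ * V) * P := by simp [Matrix.mul_assoc]
      _ = Pᵀ * P := by rw [hV]; simp
      _ = 1 := evP_star_mul A
  have hMM : Mᵀ * M = Matrix.diagonal (evμ A) := gram_AP A
  have hconj : (Vᵀ * A).trace = (Cᵀ * M).trace := by
    rw [hC, hM, Matrix.transpose_mul]
    symm
    calc (Pᵀ * Vᵀ * (A * P)).trace = (Pᵀ * ((Vᵀ * A) * P)).trace := by
          simp [Matrix.mul_assoc]
      _ = ((Vᵀ * A) * (P * Pᵀ)).trace := by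
          rw [Matrix.trace_mul_comm, Matrix.mul_assoc]
      _ = (Vᵀ * A).trace := by rw [evP_mul_star A]; simp
  rw [hconj, nuclearNorm_eq_sum]
  have htr : (Cᵀ * M).trace = ∑ i, ∑ k, C k i * M k i := by
    simp [Matrix.trace, Matrix.diag, Matrix.mul_apply]
  rw [htr]
  apply Finset.sum_le_sum
  intro i _
  have h1 : ∑ k, C k i * M k i ≤
      Real.sqrt (∑ k, (C k i) ^ 2) * Real.sqrt (∑ k, (M k i) ^ 2) :=
    Real.sum_mul_le_sqrt_mul_sqrt _ _ _
  have h2 : ∑ k, (C k i) ^ 2 = 1 := by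
    have := congrArg (fun N => N i i) hCC
    simpa [col_sq_sum, sq] using this
  have h3 : ∑ k, (M k i) ^ 2 = evμ A i := by
    have := congrArg (fun N => N i i) hMM
    simpa [col_sq_sum, sq] using this
  rw [h2, h3] at h1
  simpa using h1

end Aux2

section Aux3
variable {D d : ℕ}

lemma euclidean_inner (x y : EuclideanSpace ℝ (Fin D)) :
    (inner ℝ x y : ℝ) = ∑ k, x k * y k := by
  simp [PiLp.inner_apply, RCLike.inner_apply, starRingEnd_apply, mul_comm]

lemma exists_trace_eq_nuclearNorm (hd : d ≤ D) (A : Matrix (Fin D) (Fin d) ℝ) :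
    ∃ V : Matrix (Fin D) (Fin d) ℝ, Vᵀ * V = 1 ∧ (Vᵀ * A).trace = nuclearNorm A := by
  classical
  set μ := evμ A with hμdef
  set M := A * evP A with hMdef
  have hMM : Mᵀ * M = Matrix.diagonal μ := gram_AP A
  have hcol : ∀ i j : Fin d, (∑ k, M k i * M k j) = if i = j then μ i else 0 := by
    intro i j
    have := congrArg (fun N => N i j) hMM
    simpa [col_sq_sum, Matrix.diagonal_apply, eq_comm] using this
  have hzero : ∀ i : Fin d, μ i = 0 → ∀ k, M k i = 0 := by
    intro i h0 k
    have hsum : (∑ k, M k i * M k i) = 0 := by rw [hcol i i]; simp [h0]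
    have := (Finset.sum_eq_zero_iff_of_nonneg
      (fun k _ => mul_self_nonneg (M k i))).mp hsum k (Finset.mem_univ k)
    exact mul_self_eq_zero.mp this
  -- the candidate orthonormal columns
  let w : Fin d → EuclideanSpace ℝ (Fin D) :=
    fun i => (Real.sqrt (μ i))⁻¹ • (WithLp.toLp 2 (fun k => M k i) : EuclideanSpace ℝ (Fin D))
  let v : Fin D → EuclideanSpace ℝ (Fin D) :=
    fun j => if h : (j : ℕ) < d then w ⟨j, h⟩ else 0
  let s : Set (Fin D) := {j | ∃ h : (j : ℕ) < d, μ ⟨j, h⟩ ≠ 0}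
  have hw_inner : ∀ i j : Fin d, (inner ℝ (w i) (w j) : ℝ) =
      (Real.sqrt (μ i))⁻¹ * ((Real.sqrt (μ j))⁻¹ * (if i = j then μ i else 0)) := by
    intro i j
    rw [real_inner_smul_left, real_inner_smul_right, euclidean_inner]
    rw [hcol i j]
  have horth : Orthonormal ℝ (s.restrict v) := by
    rw [orthonormal_iff_ite]
    rintro ⟨j₁, h₁, hμ₁⟩ ⟨j₂, h₂, hμ₂⟩
    have hv₁ : v j₁ = w ⟨j₁, h₁⟩ := dif_pos h₁
    have hv₂ : v j₂ = w ⟨j₂, h₂⟩ := dif_pos h₂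
    show inner ℝ (v j₁) (v j₂) = _
    simp only [Set.restrict_apply, hv₁, hv₂, hw_inner]
    by_cases hij : j₁ = j₂
    · subst hij
      simp only [Subtype.mk.injEq, Fin.mk.injEq, eq_self_iff_true, if_true]
      have hpos : 0 < μ ⟨j₁, h₁⟩ := lt_of_le_of_ne (evμ_nonneg A _) (Ne.symm hμ₁)
      have hs : Real.sqrt (μ ⟨j₁, h₁⟩) ≠ 0 := by
        simp [Real.sqrt_ne_zero', hpos]
      rw [← Real.mul_self_sqrt (le_of_lt hpos)]
      field_simp
      rw [Real.sqrt_sq (Real.sqrt_nonneg _)]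
    · have hne : (⟨j₁, h₁⟩ : Fin d) ≠ ⟨j₂, h₂⟩ := by
        intro hcon
        injection hcon with hval
        exact hij (Fin.ext hval)
      have hne' : (⟨j₁, ⟨h₁, hμ₁⟩⟩ : s) ≠ ⟨j₂, ⟨h₂, hμ₂⟩⟩ := by
        intro hcon
        exact hij (congrArg Subtype.val hcon)
      rw [if_neg hne, if_neg hne']
      simp
  have hcard : Module.finrank ℝ (EuclideanSpace ℝ (Fin D)) = Fintype.card (Fin D) := by
    simp [finrank_euclideanSpace_fin]
  obtain ⟨b, hb⟩ := horth.exists_orthonormalBasis_extension_of_card_eq hcard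
  -- build W from the basis
  set W : Matrix (Fin D) (Fin d) ℝ := fun k i => b (Fin.castLE hd i) k with hWdef
  have hb_ite := orthonormal_iff_ite.mp b.orthonormal
  have hWW : Wᵀ * W = 1 := by
    ext i j
    have h1 : (Wᵀ * W) i j = ∑ k, W k i * W k j := col_sq_sum i j
    have h2 : (inner ℝ (b (Fin.castLE hd i)) (b (Fin.castLE hd j)) : ℝ)
        = ∑ k, W k i * W k j := by
      rw [euclidean_inner]
    rw [h1, ← h2, hb_ite]
    have : (Fin.castLE hd i = Fin.castLE hd j) ↔ i = j := by
      constructor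
      · intro h
        have hval : (i : ℕ) = (j : ℕ) := by
          simpa using congrArg Fin.val h
        exact Fin.ext hval
      · rintro rfl; rfl
    simp only [this]
    by_cases hij : i = j <;> simp [hij, Matrix.one_apply]
  have htr : (Wᵀ * M).trace = ∑ i, Real.sqrt (μ i) := by
    have h1 : (Wᵀ * M).trace = ∑ i, ∑ k, W k i * M k i := by
      simp [Matrix.trace, Matrix.diag, Matrix.mul_apply]
    rw [h1]
    apply Finset.sum_congr rfl
    intro i _
    by_cases h0 : μ i = 0
    · rw [h0, Real.sqrt_zero]
      apply Finset.sum_eq_zero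
      intro k _
      rw [hzero i h0 k, mul_zero]
    · have hjlt : ((Fin.castLE hd i : Fin D) : ℕ) < d := by
        simp
      have hfin : (⟨((Fin.castLE hd i : Fin D) : ℕ), hjlt⟩ : Fin d) = i := by
        apply Fin.ext; simp
      have hmem : (Fin.castLE hd i : Fin D) ∈ s := ⟨hjlt, by rw [hfin]; exact h0⟩
      have hbv : b (Fin.castLE hd i) = w i := by
        rw [hb _ hmem]
        show dite _ _ _ = _
        rw [dif_pos hjlt, hfin]
      have hWk : ∀ k, W k i = (Real.sqrt (μ i))⁻¹ * M k i := by
        intro k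
        show b (Fin.castLE hd i) k = _
        rw [hbv]
        rfl
      have hpos : 0 < μ i := lt_of_le_of_ne (evμ_nonneg A i) (Ne.symm h0)
      have hs : Real.sqrt (μ i) ≠ 0 := by simp [Real.sqrt_ne_zero', hpos]
      calc ∑ k, W k i * M k i = (Real.sqrt (μ i))⁻¹ * ∑ k, M k i * M k i := by
            rw [Finset.mul_sum]
            apply Finset.sum_congr rfl
            intro k _
            rw [hWk k]; ring
        _ = (Real.sqrt (μ i))⁻¹ * μ i := by rw [hcol i i, if_pos rfl]
        _ = Real.sqrt (μ i) := by
            rw [← Real.mul_self_sqrt (le_of_lt hpos)]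
            field_simp
            rw [Real.sqrt_sq (Real.sqrt_nonneg _)]
  refine ⟨W * (evP A)ᵀ, ?_, ?_⟩
  · rw [Matrix.transpose_mul, Matrix.transpose_transpose]
    calc evP A * Wᵀ * (W * (evP A)ᵀ) = evP A * (Wᵀ * W) * (evP A)ᵀ := by
          simp [Matrix.mul_assoc]
      _ = evP A * (evP A)ᵀ := by rw [hWW]; simp
      _ = 1 := evP_mul_star A
  · rw [Matrix.transpose_mul, Matrix.transpose_transpose]
    calc (evP A * Wᵀ * A).trace = (evP A * (Wᵀ * A)).trace := by rw [Matrix.mul_assoc]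
      _ = ((Wᵀ * A) * evP A).trace := Matrix.trace_mul_comm _ _
      _ = (Wᵀ * M).trace := by rw [hMdef, Matrix.mul_assoc]
      _ = ∑ i, Real.sqrt (μ i) := htr
      _ = nuclearNorm A := (nuclearNorm_eq_sum A).symm

end Aux3

section Aux4
variable {d₁ D₂ : ℕ}

lemma trace_mul_sign_le (Y : Matrix (Fin d₁) (Fin D₂) ℝ)
    (B' : Matrix (Fin D₂) (Fin d₁) ℝ) (hB' : ∀ i j, B' i j = 1 ∨ B' i j = -1) :
    (Y * B').trace ≤ l1Norm Y := by
  have h1 : (Y * B').trace = ∑ i, ∑ j, Y i j * B' j i := by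
    simp [Matrix.trace, Matrix.diag, Matrix.mul_apply]
  rw [h1, l1Norm]
  apply Finset.sum_le_sum
  intro i _
  apply Finset.sum_le_sum
  intro j _
  rcases hB' j i with h | h <;> rw [h]
  · simpa using le_abs_self (Y i j)
  · rw [mul_neg, mul_one]
    exact neg_le_abs (Y i j)

lemma exists_sign_trace_eq (Y : Matrix (Fin d₁) (Fin D₂) ℝ) :
    ∃ B' : Matrix (Fin D₂) (Fin d₁) ℝ, (∀ i j, B' i j = 1 ∨ B' i j = -1) ∧
      (Y * B').trace = l1Norm Y := by
  classical
  refine ⟨Matrix.of fun j i => if 0 ≤ Y i j then 1 else -1,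
    fun j i => by by_cases h : 0 ≤ Y i j <;> simp [h], ?_⟩
  have h1 : (Y * Matrix.of fun j i => if 0 ≤ Y i j then (1:ℝ) else -1).trace
      = ∑ i, ∑ j, Y i j * (if 0 ≤ Y i j then (1:ℝ) else -1) := by
    simp [Matrix.trace, Matrix.diag, Matrix.mul_apply]
  rw [h1, l1Norm]
  apply Finset.sum_congr rfl
  intro i _
  apply Finset.sum_congr rfl
  intro j _
  by_cases h : 0 ≤ Y i j
  · rw [if_pos h, mul_one, abs_of_nonneg h]
  · rw [if_neg h, abs_of_neg (lt_of_not_ge h)]; ring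

end Aux4

theorem l1pca_solution_from_bnuc
    {D₁ D₂ d₁ : ℕ} (hd : d₁ ≤ D₁) (X : Matrix (Fin D₁) (Fin D₂) ℝ)
    (B : Matrix (Fin D₂) (Fin d₁) ℝ) (hB : ∀ i j, B i j = 1 ∨ B i j = -1)
    (hBmax : ∀ B' : Matrix (Fin D₂) (Fin d₁) ℝ, (∀ i j, B' i j = 1 ∨ B' i j = -1) →
      nuclearNorm (X * B') ≤ nuclearNorm (X * B))
    (U : Matrix (Fin D₁) (Fin d₁) ℝ) (hU : Uᵀ * U = 1)
    (hUmax : ∀ V : Matrix (Fin D₁) (Fin d₁) ℝ, Vᵀ * V = 1 →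
      (Vᵀ * X * B).trace ≤ (Uᵀ * X * B).trace) :
    (∀ V : Matrix (Fin D₁) (Fin d₁) ℝ, Vᵀ * V = 1 →
      l1Norm (Vᵀ * X) ≤ l1Norm (Uᵀ * X)) ∧
    l1Norm (Uᵀ * X) = (Uᵀ * X * B).trace ∧
    (Uᵀ * X * B).trace = nuclearNorm (X * B) := by
  -- third equality first
  have h3 : (Uᵀ * X * B).trace = nuclearNorm (X * B) := by
    obtain ⟨V₀, hV₀, hV₀tr⟩ := exists_trace_eq_nuclearNorm hd (X * B)
    have hle : (Uᵀ * X * B).trace ≤ nuclearNorm (X * B) := by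
      rw [Matrix.mul_assoc]
      exact trace_le_nuclearNorm (X * B) U hU
    have hge : nuclearNorm (X * B) ≤ (Uᵀ * X * B).trace := by
      rw [← hV₀tr, ← Matrix.mul_assoc]
      exact hUmax V₀ hV₀
    linarith
  -- key upper bound for any semi-orthogonal V
  have key : ∀ V : Matrix (Fin D₁) (Fin d₁) ℝ, Vᵀ * V = 1 →
      l1Norm (Vᵀ * X) ≤ (Uᵀ * X * B).trace := by
    intro V hV
    obtain ⟨B₁, hB₁sign, hB₁⟩ := exists_sign_trace_eq (Vᵀ * X)
    have h1 : ((Vᵀ * X) * B₁).trace ≤ nuclearNorm (X * B₁) := by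
      rw [Matrix.mul_assoc]
      exact trace_le_nuclearNorm (X * B₁) V hV
    have h2 : nuclearNorm (X * B₁) ≤ nuclearNorm (X * B) := hBmax B₁ hB₁sign
    rw [← hB₁]
    linarith [h3.ge]
  have h2 : l1Norm (Uᵀ * X) = (Uᵀ * X * B).trace := by
    have hub : l1Norm (Uᵀ * X) ≤ (Uᵀ * X * B).trace := key U hU
    have hlb : (Uᵀ * X * B).trace ≤ l1Norm (Uᵀ * X) := by
      exact trace_mul_sign_le (Uᵀ * X) B hB
    linarith
  refine ⟨fun V hV => ?_, h2, h3⟩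
  rw [h2]
  exact key V hV
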